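/- Let P ⊆ ℝ³ be a compact convex set with 0 in its interior, let k ≥ 2, and let q₀, q₁, …, q_k ∈ ℝ³ be points such that each segment [q_{i−1}, q_i] is nondegenerate and contained in ∂P, and such that q_{i−1}, q_i, q_{i+1} are not collinear for 1 ≤ i ≤ k−1. Assume the norm strictly increases along the polygonal path q₀ → q₁ → ⋯ → q_k (if x strictly precedes y on the path then ‖x‖ < ‖y‖). For each i let L_i be the line through q_{i−1} and q_i (note 0 ∉ L_i), let Q_i be the plane containing 0 and L_i, and let T_i be the plane containing L_i and perpendicular to Q_i; assume that each T_i supports P (P lies in one of the closed half-spaces bounded by T_i) and that q_{i+1} ∉ T_i and q_{i−1} ∉ T_{i+1} for 1 ≤ i ≤ k−1. Then the sequence of distances dist(0, L₁) < dist(0, L₂) < ⋯ < dist(0, L_k) is strictly increasing. (This is the paper's theorem that the distances from the reference point to the lines of consecutive segments of an ascending curve strictly increase.) -/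

import Mathlib

open scoped RealInnerProductSpace

variable {E : Type*} [NormedAddCommGroup E] [InnerProductSpace ℝ E]

/-- distance from 0 to the line through `a, b`, squared. -/
lemma aux_infDist_line_sq (a b : E) (hab : a ≠ b) :
    (Metric.infDist 0 (affineSpan ℝ ({a, b} : Set E) : Set E)) ^ 2
      = ‖b‖ ^ 2 - ⟪b - a, b⟫ ^ 2 / ‖b - a‖ ^ 2 := by
  set v : E := b - a with hvdef
  have hv : v ≠ 0 := sub_ne_zero.mpr (Ne.symm hab)
  have hvn : (0:ℝ) < ‖v‖ := norm_pos_iff.mpr hv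
  set t₀ : ℝ := ⟪v, b⟫ / ‖v‖ ^ 2 with ht₀
  set f : E := b - t₀ • v with hf
  have hfv : ⟪f, v⟫ = 0 := by
    have : ⟪f, v⟫ = ⟪b, v⟫ - t₀ * ⟪v, v⟫ := by
      simp [hf, inner_sub_left, real_inner_smul_left]
    rw [this, real_inner_self_eq_norm_sq, ht₀, real_inner_comm b v]
    field_simp
    ring
  have hmemf : f ∈ (affineSpan ℝ ({a, b} : Set E) : Set E) := by
    have hfe : f = t₀ • (a -ᵥ b) +ᵥ b := by
      simp only [vsub_eq_sub, vadd_eq_add, hf, hvdef]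
      rw [show a - b = -(b - a) by rw [neg_sub], smul_neg]
      abel
    rw [hfe]
    exact vadd_right_mem_affineSpan_pair.mpr ⟨t₀, rfl⟩
  have hinf : Metric.infDist 0 (affineSpan ℝ ({a, b} : Set E) : Set E) = ‖f‖ := by
    refine le_antisymm ?_ ?_
    · have h := Metric.infDist_le_dist_of_mem (x := (0:E)) hmemf
      rwa [dist_zero_left] at h
    · rw [Metric.infDist_eq_iInf]
      have : Nonempty (affineSpan ℝ ({a, b} : Set E) : Set E) := ⟨⟨f, hmemf⟩⟩
      refine le_ciInf fun y => ?_
      obtain ⟨y, hy⟩ := y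
      have h1 : y -ᵥ b ∈ vectorSpan ℝ ({a, b} : Set E) := by
        rw [← direction_affineSpan]
        exact AffineSubspace.vsub_mem_direction hy (right_mem_affineSpan_pair ℝ a b)
      obtain ⟨r, hr⟩ := mem_vectorSpan_pair.mp h1
      have hye : y = f + (t₀ - r) • v := by
        have : y - b = r • (a - b) := by simpa [vsub_eq_sub] using hr.symm
        have hy' : y = b + r • (a - b) := by
          rw [← this]; abel
        rw [hy', hf, hvdef, show a - b = -(b - a) by rw [neg_sub], smul_neg, sub_smul]
        abel
      have hsq : ‖y‖ ^ 2 = ‖f‖ ^ 2 + ‖(t₀ - r) • v‖ ^ 2 := by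
        rw [hye, norm_add_sq_real, real_inner_smul_right, hfv]
        ring
      have : ‖f‖ ≤ ‖y‖ := by
        refine le_of_pow_le_pow_left₀ two_ne_zero (norm_nonneg y) ?_
        nlinarith [sq_nonneg ‖(t₀ - r) • v‖]
      simpa [dist_zero_left] using this
  rw [hinf]
  have : ‖f‖ ^ 2 = ‖b‖ ^ 2 - 2 * (t₀ * ⟪b, v⟫) + t₀ ^ 2 * ‖v‖ ^ 2 := by
    rw [hf, norm_sub_sq_real, real_inner_smul_right, norm_smul, mul_pow]
    simp [sq_abs]
    try ring
  rw [this, ht₀, real_inner_comm b v]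
  field_simp
  ring

lemma aux_inner_self (z b m v : E) (c₁ c₂ : ℝ) (hz : z = b - c₁ • m - c₂ • v)
    (h1 : ⟪z, m⟫ = 0) (h2 : ⟪z, v⟫ = 0) : ⟪z, b⟫ = ‖z‖ ^ 2 := by
  have hb : b = z + c₁ • m + c₂ • v := by rw [hz]; abel
  rw [hb, inner_add_right, inner_add_right, real_inner_smul_right, real_inner_smul_right,
    h1, h2, real_inner_self_eq_norm_sq]
  ring

/-- orthogonal decomposition of `b` in the plane spanned by `a, b`. -/
lemma aux_decomp (a b m : E) (hm : m ≠ 0) (hab : a ≠ b)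
    (hmem : m ∈ Submodule.span ℝ ({a, b} : Set E)) (horth : ⟪m, b - a⟫ = 0) :
    b = (⟪m, b⟫ / ‖m‖ ^ 2) • m + (⟪b - a, b⟫ / ‖b - a‖ ^ 2) • (b - a) := by
  set v : E := b - a with hvdef
  have hv : v ≠ 0 := sub_ne_zero.mpr (Ne.symm hab)
  have hvn : (0:ℝ) < ‖v‖ := norm_pos_iff.mpr hv
  have hmn : (0:ℝ) < ‖m‖ := norm_pos_iff.mpr hm
  set z : E := b - (⟪m, b⟫ / ‖m‖ ^ 2) • m - (⟪v, b⟫ / ‖v‖ ^ 2) • v with hz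
  have hmv : ⟪v, m⟫ = 0 := by rw [real_inner_comm]; exact horth
  have hzm : ⟪m, z⟫ = 0 := by
    have : ⟪m, z⟫ = ⟪m, b⟫ - ⟪m, b⟫ / ‖m‖ ^ 2 * ⟪m, m⟫ - ⟪v, b⟫ / ‖v‖ ^ 2 * ⟪m, v⟫ := by
      simp [hz, inner_sub_right, real_inner_smul_right]
    rw [this, horth, real_inner_self_eq_norm_sq]
    field_simp
    ring
  have hzv : ⟪v, z⟫ = 0 := by
    have : ⟪v, z⟫ = ⟪v, b⟫ - ⟪m, b⟫ / ‖m‖ ^ 2 * ⟪v, m⟫ - ⟪v, b⟫ / ‖v‖ ^ 2 * ⟪v, v⟫ := by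
      simp [hz, inner_sub_right, real_inner_smul_right]
    rw [this, hmv, real_inner_self_eq_norm_sq]
    field_simp
    ring
  rcases eq_or_ne z 0 with hz0 | hz0
  · have : b - ((⟪m, b⟫ / ‖m‖ ^ 2) • m + (⟪v, b⟫ / ‖v‖ ^ 2) • v) = 0 := by
      rw [← hz0, hz]; abel
    have := sub_eq_zero.mp this
    exact this
  · exfalso
    have hzm' : ⟪z, m⟫ = 0 := by rw [real_inner_comm]; exact hzm
    have hzv' : ⟪z, v⟫ = 0 := by rw [real_inner_comm]; exact hzv
    have hzb : ⟪z, b⟫ = ‖z‖ ^ 2 :=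
      aux_inner_self z b m v (⟪m, b⟫ / ‖m‖ ^ 2) (⟪v, b⟫ / ‖v‖ ^ 2) hz hzm' hzv'
    have hza : ⟪z, a⟫ = ‖z‖ ^ 2 := by
      have h1 : ⟪z, a⟫ = ⟪z, b⟫ - ⟪z, v⟫ := by
        rw [hvdef, inner_sub_right]; ring
      rw [h1, hzb, hzv', sub_zero]
    obtain ⟨x, y, hxy⟩ := Submodule.mem_span_pair.mp hmem
    have h0 : (x + y) * ‖z‖ ^ 2 = 0 := by
      have h2 : ⟪z, m⟫ = x * ⟪z, a⟫ + y * ⟪z, b⟫ := by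
        rw [← hxy]; simp [inner_add_right, real_inner_smul_right]
      rw [hzm', hza, hzb] at h2
      linarith
    have hzn : ‖z‖ ^ 2 ≠ 0 := pow_ne_zero 2 (norm_ne_zero_iff.mpr hz0)
    have hxy0 : y = -x := by
      rcases mul_eq_zero.mp h0 with h | h
      · linarith
      · exact absurd h hzn
    have hmx : m = -(x • v) := by
      rw [← hxy, hxy0, hvdef, smul_sub]
      module
    have h3 : ⟪m, v⟫ = -(x * ‖v‖ ^ 2) := by
      rw [hmx]; simp [real_inner_smul_left, real_inner_self_eq_norm_sq]
    rw [horth] at h3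
    have hx0 : x = 0 := by
      have hv2 : ‖v‖ ^ 2 ≠ 0 := pow_ne_zero 2 (norm_ne_zero_iff.mpr hv)
      rcases mul_eq_zero.mp (by linarith : x * ‖v‖ ^ 2 = 0) with h | h
      · exact h
      · exact absurd h hv2
    rw [hx0] at hmx
    simp at hmx
    exact hm hmx

/-- strict monotonicity of the norm along the segment implies the inner product
of the start point with the direction is nonnegative. -/
lemma aux_mono_inner (a b : E)
    (h : StrictMonoOn (fun t : ℝ => ‖AffineMap.lineMap a b t‖) (Set.Icc 0 1)) :
    0 ≤ ⟪a, b - a⟫ := by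
  by_contra hlt
  push_neg at hlt
  set v : E := b - a with hvdef
  have hv : v ≠ 0 := by
    intro h0
    rw [h0] at hlt
    simp at hlt
  have hvn : (0:ℝ) < ‖v‖ := norm_pos_iff.mpr hv
  set t : ℝ := min 1 (-⟪a, v⟫ / ‖v‖ ^ 2) with htdef
  have ht0 : 0 < t := by
    apply lt_min one_pos
    apply div_pos (by linarith) (by positivity)
  have ht1 : t ≤ 1 := min_le_left _ _
  have hkey := h (Set.mem_Icc.mpr ⟨le_refl 0, zero_le_one⟩)
    (Set.mem_Icc.mpr ⟨le_of_lt ht0, ht1⟩) ht0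
  have e0 : (AffineMap.lineMap a b : ℝ →ᵃ[ℝ] E) (0:ℝ) = a := AffineMap.lineMap_apply_zero a b
  have et : (AffineMap.lineMap a b : ℝ →ᵃ[ℝ] E) t = t • v + a := by
    rw [AffineMap.lineMap_apply_module]
    simp only [hvdef]
    module
  simp only [e0, et] at hkey
  have hsq : ‖t • v + a‖ ^ 2 = t ^ 2 * ‖v‖ ^ 2 + 2 * (t * ⟪a, v⟫) + ‖a‖ ^ 2 := by
    rw [norm_add_sq_real, real_inner_smul_left, norm_smul, mul_pow]
    rw [real_inner_comm]
    simp [sq_abs]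
    try ring
  have htb : t * ‖v‖ ^ 2 ≤ -⟪a, v⟫ := by
    have : t ≤ -⟪a, v⟫ / ‖v‖ ^ 2 := min_le_right _ _
    calc t * ‖v‖ ^ 2 ≤ (-⟪a, v⟫ / ‖v‖ ^ 2) * ‖v‖ ^ 2 := by
          apply mul_le_mul_of_nonneg_right this (by positivity)
      _ = -⟪a, v⟫ := by field_simp
  have hlt2 : ‖t • v + a‖ ^ 2 < ‖a‖ ^ 2 := by
    rw [hsq]
    nlinarith
  nlinarith [norm_nonneg a, norm_nonneg (t • v + a)]

lemma aux_key_lt (b c m v : E) (hv : v ≠ 0) (hwne : c ≠ b)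
    (hdec : b = (⟪m, b⟫ / ‖m‖ ^ 2) • m + (⟪v, b⟫ / ‖v‖ ^ 2) • v)
    (hm : m ≠ 0) (hmb : 0 < ⟪m, b⟫) (hmw : ⟪m, c - b⟫ < 0) (hvb : 0 < ⟪v, b⟫) :
    ⟪c - b, b⟫ / ‖c - b‖ < ⟪v, b⟫ / ‖v‖ := by
  set w : E := c - b with hwdef
  have hw : w ≠ 0 := sub_ne_zero.mpr hwne
  have hwn : (0:ℝ) < ‖w‖ := norm_pos_iff.mpr hw
  have hvn : (0:ℝ) < ‖v‖ := norm_pos_iff.mpr hv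
  have hmn : (0:ℝ) < ‖m‖ := norm_pos_iff.mpr hm
  have hbw : ⟪w, b⟫ = ⟪m, b⟫ / ‖m‖ ^ 2 * ⟪w, m⟫ + ⟪v, b⟫ / ‖v‖ ^ 2 * ⟪w, v⟫ := by
    nth_rewrite 1 [hdec]
    rw [inner_add_right, real_inner_smul_right, real_inner_smul_right]
  have h1 : ⟪m, b⟫ / ‖m‖ ^ 2 * ⟪w, m⟫ < 0 := by
    apply mul_neg_of_pos_of_neg
    · positivity
    · rw [real_inner_comm]; exact hmw
  have h2 : ⟪v, b⟫ / ‖v‖ ^ 2 * ⟪w, v⟫ ≤ ⟪v, b⟫ / ‖v‖ ^ 2 * (‖w‖ * ‖v‖) := by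
    apply mul_le_mul_of_nonneg_left (real_inner_le_norm w v) (by positivity)
  have h3 : ⟪w, b⟫ < ⟪v, b⟫ / ‖v‖ * ‖w‖ := by
    rw [hbw]
    have : ⟪v, b⟫ / ‖v‖ ^ 2 * (‖w‖ * ‖v‖) = ⟪v, b⟫ / ‖v‖ * ‖w‖ := by
      field_simp
    nlinarith
  rw [div_lt_div_iff₀ hwn hvn]
  calc ⟪w, b⟫ * ‖v‖ < (⟪v, b⟫ / ‖v‖ * ‖w‖) * ‖v‖ := by
        exact mul_lt_mul_of_pos_right h3 hvn
    _ = ⟪v, b⟫ * ‖w‖ := by field_simp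

lemma aux_main_step (P : Set E) (hint : (0:E) ∈ interior P)
    (a b c m : E) (hcP : c ∈ P)
    (hab : a ≠ b) (hbc : b ≠ c)
    (hm0 : m ≠ 0) (hmspan : m ∈ Submodule.span ℝ ({a, b} : Set E))
    (hmv : ⟪m, b - a⟫ = 0) (hmw : ⟪m, c - b⟫ ≠ 0)
    (hP : ∀ x ∈ P, ⟪m, x - a⟫ ≤ 0)
    (hav : 0 ≤ ⟪a, b - a⟫) (hbw : 0 ≤ ⟪b, c - b⟫) :
    Metric.infDist 0 (affineSpan ℝ ({a, b} : Set E) : Set E) <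
    Metric.infDist 0 (affineSpan ℝ ({b, c} : Set E) : Set E) := by
  set v : E := b - a with hvdef
  set w : E := c - b with hwdef
  have hv : v ≠ 0 := sub_ne_zero.mpr (Ne.symm hab)
  have hw : w ≠ 0 := sub_ne_zero.mpr (Ne.symm hbc)
  have hvn : (0:ℝ) < ‖v‖ := norm_pos_iff.mpr hv
  have hwn : (0:ℝ) < ‖w‖ := norm_pos_iff.mpr hw
  have hmn : (0:ℝ) < ‖m‖ := norm_pos_iff.mpr hm0
  -- ⟪m, a⟫ > 0 from the interior point
  have hma : 0 < ⟪m, a⟫ := by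
    obtain ⟨ε, hε, hball⟩ := Metric.mem_nhds_iff.mp (mem_interior_iff_mem_nhds.mp hint)
    set x : E := (ε / 2) • ((‖m‖)⁻¹ • m) with hx
    have hxnorm : ‖x‖ = ε / 2 := by
      rw [hx, norm_smul, norm_smul, norm_inv, norm_norm, inv_mul_cancel₀ (ne_of_gt hmn),
        mul_one, Real.norm_eq_abs, abs_of_pos (half_pos hε)]
    have hxP : x ∈ P := hball (by
      rw [Metric.mem_ball, dist_zero_right, hxnorm]
      linarith)
    have hx1 := hP x hxP
    have hmx : ⟪m, x⟫ = (ε / 2) * ‖m‖ := by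
      rw [hx, real_inner_smul_right, real_inner_smul_right, real_inner_self_eq_norm_sq]
      field_simp
    rw [inner_sub_right, hmx] at hx1
    have : (0:ℝ) < (ε / 2) * ‖m‖ := by positivity
    linarith
  have hmb : 0 < ⟪m, b⟫ := by
    have : ⟪m, b⟫ = ⟪m, a⟫ + ⟪m, v⟫ := by
      rw [hvdef, inner_sub_right]; ring
    rw [this, hmv]; linarith
  -- ⟪m, w⟫ < 0
  have hmab : ⟪m, b⟫ = ⟪m, a⟫ := by
    have h5 := hmv
    rw [hvdef, inner_sub_right] at h5
    linarith
  have hmwneg : ⟪m, w⟫ < 0 := by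
    have h1 := hP c hcP
    have h2 : ⟪m, w⟫ = ⟪m, c - a⟫ := by
      rw [hwdef, inner_sub_right, inner_sub_right, hmab]
    rw [← h2] at h1
    exact lt_of_le_of_ne h1 hmw
  -- ⟪v, b⟫ > 0
  have hvb : 0 < ⟪v, b⟫ := by
    have h4 : ⟪v, b⟫ = ⟪a, v⟫ + ⟪v, v⟫ := by
      nth_rewrite 1 [show b = a + v from by rw [hvdef]; abel]
      rw [inner_add_right, real_inner_comm v a]
    rw [h4, real_inner_self_eq_norm_sq]
    nlinarith
  -- decomposition of b
  have hdec := aux_decomp a b m hm0 hab hmspan hmv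
  -- key inequality
  have hkey := aux_key_lt b c m v hv (Ne.symm hbc) hdec hm0 hmb hmwneg hvb
  -- distances
  have hd1 : (Metric.infDist 0 (affineSpan ℝ ({a, b} : Set E) : Set E)) ^ 2
      = ‖b‖ ^ 2 - (⟪v, b⟫ / ‖v‖) ^ 2 := by
    rw [aux_infDist_line_sq a b hab, div_pow]
  have hd2 : (Metric.infDist 0 (affineSpan ℝ ({b, c} : Set E) : Set E)) ^ 2
      = ‖b‖ ^ 2 - (⟪w, b⟫ / ‖w‖) ^ 2 := by
    rw [Set.pair_comm b c, aux_infDist_line_sq c b (Ne.symm hbc)]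
    have h1 : b - c = -w := by rw [hwdef]; abel
    rw [h1, norm_neg, inner_neg_left, neg_sq, div_pow]
  have hr0 : 0 ≤ ⟪w, b⟫ / ‖w‖ := by
    apply div_nonneg _ (le_of_lt hwn)
    rw [real_inner_comm]; exact hbw
  have hsq : (⟪w, b⟫ / ‖w‖) ^ 2 < (⟪v, b⟫ / ‖v‖) ^ 2 := by
    apply pow_lt_pow_left₀ hkey hr0 two_ne_zero
  have hlt2 : (Metric.infDist 0 (affineSpan ℝ ({a, b} : Set E) : Set E)) ^ 2
      < (Metric.infDist 0 (affineSpan ℝ ({b, c} : Set E) : Set E)) ^ 2 := by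
    rw [hd1, hd2]; linarith
  exact lt_of_pow_lt_pow_left₀ 2 Metric.infDist_nonneg hlt2

/-- along an ascending polygonal path `q 0 → q 1 → ⋯ → q k` on the boundary
of a compact convex body `P ∋ 0`, whose segments satisfy the supporting-plane condition
(the plane `T i` through the line `L i` of the `i`-th segment, perpendicular to the plane
`Q i` spanned by `0` and `L i`, supports `P`, with normal `n i`), and along which the norm
strictly increases, the distances from `0` to the lines of consecutive segments strictly
increase. Here the `i`-th segment is `[q i, q (i+1)]` for `0 ≤ i < k`. -/
theorem infDist_to_segment_lines_strict_mono
    (P : Set (EuclideanSpace ℝ (Fin 3))) (hPc : IsCompact P) (hPconv : Convex ℝ P)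
    (h0 : (0 : EuclideanSpace ℝ (Fin 3)) ∈ interior P)
    (k : ℕ) (hk : 2 ≤ k)
    (q : ℕ → EuclideanSpace ℝ (Fin 3)) (n : ℕ → EuclideanSpace ℝ (Fin 3))
    -- each segment is nondegenerate and contained in the boundary of `P`
    (hseg : ∀ i < k, q i ≠ q (i + 1) ∧ segment ℝ (q i) (q (i + 1)) ⊆ frontier P)
    -- consecutive vertices are not collinear
    (hcol : ∀ i, 1 ≤ i → i < k →
      ¬ Collinear ℝ ({q (i - 1), q i, q (i + 1)} : Set (EuclideanSpace ℝ (Fin 3))))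
    -- the norm strictly increases along the polygonal path
    (hmono : ∀ i < k, StrictMonoOn
      (fun t : ℝ => ‖AffineMap.lineMap (q i) (q (i + 1)) t‖) (Set.Icc 0 1))
    -- `n i` is the normal vector of the plane `T i`:
    (hn0 : ∀ i < k, n i ≠ 0)
    -- `T i` is perpendicular to the plane `Q i` through `0`, `q i`, `q (i+1)`,
    -- i.e. its normal lies in the direction space of `Q i`
    (hnQ : ∀ i < k, n i ∈ Submodule.span ℝ ({q i, q (i + 1)} : Set (EuclideanSpace ℝ (Fin 3))))
    -- `T i` contains the line `L i` through `q i` and `q (i+1)`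
    (hnL : ∀ i < k, ⟪n i, q (i + 1) - q i⟫ = 0)
    -- `T i` supports `P`: `P` lies in one of the closed half-spaces bounded by `T i`
    (hsupp : ∀ i < k, (∀ x ∈ P, ⟪n i, x - q i⟫ ≤ 0) ∨ (∀ x ∈ P, 0 ≤ ⟪n i, x - q i⟫))
    -- `q (i+2) ∉ T i` and `q i ∉ T (i+1)`
    (hnotin : ∀ i, i + 1 < k →
      ⟪n i, q (i + 2) - q (i + 1)⟫ ≠ 0 ∧ ⟪n (i + 1), q i - q (i + 1)⟫ ≠ 0) :
    ∀ i, i + 1 < k →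
      Metric.infDist 0 (affineSpan ℝ {q i, q (i + 1)} : Set (EuclideanSpace ℝ (Fin 3))) <
      Metric.infDist 0
        (affineSpan ℝ {q (i + 1), q (i + 2)} : Set (EuclideanSpace ℝ (Fin 3))) := by
  intro i hik
  have hik' : i < k := Nat.lt_of_succ_lt hik
  obtain ⟨hab, hsegi⟩ := hseg i hik'
  obtain ⟨hbc, hsegi1⟩ := hseg (i + 1) hik
  have hcl : IsClosed P := hPc.isClosed
  have hfrP : frontier P ⊆ P := hcl.frontier_subset
  have haP : q i ∈ P := hfrP (hsegi (left_mem_segment ℝ _ _))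
  have hbP : q (i + 1) ∈ P := hfrP (hsegi (right_mem_segment ℝ _ _))
  have hcP : q (i + 2) ∈ P := hfrP (hsegi1 (right_mem_segment ℝ _ _))
  have hav : 0 ≤ ⟪q i, q (i + 1) - q i⟫ := aux_mono_inner _ _ (hmono i hik')
  have hbw : 0 ≤ ⟪q (i + 1), q (i + 2) - q (i + 1)⟫ := aux_mono_inner _ _ (hmono (i + 1) hik)
  have hmw_ne : ⟪n i, q (i + 2) - q (i + 1)⟫ ≠ 0 := (hnotin i hik).1
  rcases hsupp i hik' with hs | hs
  · exact aux_main_step P h0 (q i) (q (i + 1)) (q (i + 2)) (n i) hcP hab hbc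
      (hn0 i hik') (hnQ i hik') (hnL i hik') hmw_ne hs hav hbw
  · refine aux_main_step P h0 (q i) (q (i + 1)) (q (i + 2)) (-(n i)) hcP hab hbc
      (neg_ne_zero.mpr (hn0 i hik')) (Submodule.neg_mem _ (hnQ i hik')) ?_ ?_ ?_ hav hbw
    · rw [inner_neg_left, hnL i hik', neg_zero]
    · rw [inner_neg_left]
      exact neg_ne_zero.mpr hmw_ne
    · intro x hx
      rw [inner_neg_left]
      exact neg_nonpos.mpr (hs x hx)
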